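/- Let 0 < p_1 < p_2 < p_3 < 1/2 and set τ_i = τ(p_i,·) for i = 1,2,3. Then the function q ↦ (τ_1(q) − τ_2(q))/(τ_2(q) − τ_3(q)) is well defined (the denominator is nonzero) and strictly decreasing on (1,+∞). -/

import Mathlib

open MeasureTheory Filter Set

set_option maxHeartbeats 1000000

noncomputable section

/-- `τ(p,q) = log(p^q + (1-p)^q) / log 2`, the `L^q`-spectrum of the homogeneous
Bernoulli product with weight `p`. -/
def taup (p q : ℝ) : ℝ :=
  Real.log (p ^ q + (1 - p) ^ q) / Real.log 2

/-! Auxiliary machinery: write `log(p^q + (1-p)^q) = Lf (q x) - q Lf x` where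
`x = log (p/(1-p))` and `Lf` is the softplus function, then study monotonicity
via two applications of Cauchy's mean value theorem and a cosh inequality. -/

def sgm (x : ℝ) : ℝ := Real.exp x / (1 + Real.exp x)
def sgm' (x : ℝ) : ℝ := Real.exp x / (1 + Real.exp x) ^ 2
def Lf (x : ℝ) : ℝ := Real.log (1 + Real.exp x)
def Gf (q x : ℝ) : ℝ := Lf (q * x) - q * Lf x
def Dv (q x : ℝ) : ℝ := q * sgm (q * x) - q * sgm x

lemma one_add_exp_pos (x : ℝ) : 0 < 1 + Real.exp x := by positivity

lemma one_add_exp_ne (x : ℝ) : 1 + Real.exp x ≠ 0 := (one_add_exp_pos x).ne'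

lemma sgm'_pos (x : ℝ) : 0 < sgm' x := by unfold sgm'; positivity

lemma continuous_sgm : Continuous sgm :=
  Real.continuous_exp.div (continuous_const.add Real.continuous_exp) one_add_exp_ne

lemma hasDerivAt_Lf (x : ℝ) : HasDerivAt Lf (sgm x) x := by
  have h : HasDerivAt (fun x : ℝ => 1 + Real.exp x) (Real.exp x) x :=
    (Real.hasDerivAt_exp x).const_add 1
  exact h.log (one_add_exp_ne x)

lemma hasDerivAt_sgm (x : ℝ) : HasDerivAt sgm (sgm' x) x := by
  have h := (Real.hasDerivAt_exp x).div ((Real.hasDerivAt_exp x).const_add 1) (one_add_exp_ne x)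
  refine h.congr_deriv ?_
  unfold sgm'; field_simp; ring

lemma sgm_strictMono : StrictMono sgm := by
  intro u v huv
  unfold sgm
  rw [div_lt_div_iff₀ (one_add_exp_pos u) (one_add_exp_pos v)]
  have := Real.exp_lt_exp.2 huv
  nlinarith [Real.exp_pos u, Real.exp_pos v]

lemma hasDerivAt_Gf (q x : ℝ) : HasDerivAt (fun x => Gf q x) (Dv q x) x := by
  have hq : HasDerivAt (fun x : ℝ => q * x) q x := by
    simpa using (hasDerivAt_id x).const_mul q
  have h1 : HasDerivAt (fun x : ℝ => Lf (q * x)) (sgm (q * x) * q) x :=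
    (hasDerivAt_Lf (q * x)).comp x hq
  have h2 : HasDerivAt (fun x : ℝ => q * Lf x) (q * sgm x) x :=
    (hasDerivAt_Lf x).const_mul q
  have := h1.sub h2
  refine this.congr_deriv ?_
  unfold Dv; ring

lemma sgm'_eq (u : ℝ) : sgm' u = 1 / (4 * Real.cosh (u / 2) ^ 2) := by
  unfold sgm'
  rw [Real.cosh_eq]
  have h1 : Real.exp (u / 2) * Real.exp (u / 2) = Real.exp u := by
    rw [← Real.exp_add]; ring_nf
  have h2 : Real.exp (u / 2) * Real.exp (-(u / 2)) = 1 := by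
    rw [← Real.exp_add]; simp
  have h3 : Real.exp (-(u / 2)) * Real.exp (-(u / 2)) = Real.exp (-u) := by
    rw [← Real.exp_add]; ring_nf
  have h4 : Real.exp u * Real.exp (-u) = 1 := by rw [← Real.exp_add]; simp
  have e1 := Real.exp_pos u
  rw [div_eq_div_iff (by positivity) (by positivity)]
  nlinarith [Real.exp_pos (u/2), Real.exp_pos (-(u/2))]

lemma two_cosh_mul (A B : ℝ) :
    2 * (Real.cosh A * Real.cosh B) = Real.cosh (A + B) + Real.cosh (A - B) := by
  rw [Real.cosh_add, Real.cosh_sub]; ring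

/-- The core cosh inequality. -/
lemma cosh_key {x y t s : ℝ} (hxy : x < y) (hy : y < 0) (ht : 0 < t) (hts : t < s) :
    Real.cosh (s * y / 2) * Real.cosh (t * x / 2) <
      Real.cosh (t * y / 2) * Real.cosh (s * x / 2) := by
  have hx : x < 0 := hxy.trans hy
  have hs : 0 < s := ht.trans hts
  have h1 : Real.cosh (s * y / 2 + t * x / 2) < Real.cosh (t * y / 2 + s * x / 2) := by
    rw [Real.cosh_lt_cosh]
    rw [abs_of_nonpos (by nlinarith), abs_of_nonpos (by nlinarith)]
    nlinarith
  have h2 : Real.cosh (s * y / 2 - t * x / 2) ≤ Real.cosh (t * y / 2 - s * x / 2) := by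
    rw [Real.cosh_le_cosh]
    have hpos : (0:ℝ) ≤ t * y / 2 - s * x / 2 := by nlinarith
    rw [abs_of_nonneg hpos, abs_le]
    constructor <;> nlinarith
  nlinarith [two_cosh_mul (s * y / 2) (t * x / 2), two_cosh_mul (t * y / 2) (s * x / 2)]

/-- Log-supermodularity of `sgm'` along rays: for `x < y < 0` and `0 < t < s`. -/
lemma claimC {x y t s : ℝ} (hxy : x < y) (hy : y < 0) (ht : 0 < t) (hts : t < s) :
    sgm' (t * y) * sgm' (s * x) < sgm' (s * y) * sgm' (t * x) := by
  have key := cosh_key hxy hy ht hts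
  have c1 := Real.cosh_pos (s * y / 2)
  have c2 := Real.cosh_pos (t * x / 2)
  have c3 := Real.cosh_pos (t * y / 2)
  have c4 := Real.cosh_pos (s * x / 2)
  rw [sgm'_eq, sgm'_eq, sgm'_eq, sgm'_eq]
  rw [div_mul_div_comm, div_mul_div_comm, div_lt_div_iff₀ (by positivity) (by positivity)]
  nlinarith [mul_pos c1 c2, mul_pos c3 c4]

lemma hasDerivAt_sgm_mul (x t : ℝ) :
    HasDerivAt (fun t : ℝ => sgm (t * x)) (sgm' (t * x) * x) t := by
  have hm : HasDerivAt (fun t : ℝ => t * x) x t := by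
    simpa using (hasDerivAt_id t).mul_const x
  exact (hasDerivAt_sgm (t * x)).comp t hm

lemma mvt_sgm (x y : ℝ) {c d : ℝ} (hcd : c < d) :
    ∃ t ∈ Ioo c d,
      (sgm (d * x) - sgm (c * x)) * (sgm' (t * y) * y)
        = (sgm (d * y) - sgm (c * y)) * (sgm' (t * x) * x) := by
  have hcy : Continuous fun t : ℝ => sgm (t * y) :=
    continuous_sgm.comp (continuous_id.mul continuous_const)
  have hcx : Continuous fun t : ℝ => sgm (t * x) :=
    continuous_sgm.comp (continuous_id.mul continuous_const)
  exact exists_ratio_hasDerivAt_eq_ratio_slope (fun t => sgm (t * y))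
    (fun t => sgm' (t * y) * y) hcd hcy.continuousOn
    (fun t _ => hasDerivAt_sgm_mul y t)
    (fun t => sgm (t * x)) (fun t => sgm' (t * x) * x)
    hcx.continuousOn
    (fun t _ => hasDerivAt_sgm_mul x t)

/-- Level-2 monotonicity via Cauchy MVT. -/
lemma sub_R {x y a b : ℝ} (hxy : x < y) (hy : y < 0) (ha : 1 < a) (hab : a < b) :
    Dv b x * Dv a y < Dv b y * Dv a x := by
  have hx : x < 0 := hxy.trans hy
  obtain ⟨t₀, ht₀, e1⟩ := mvt_sgm x y ha
  obtain ⟨s₀, hs₀, e2⟩ := mvt_sgm x y hab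
  simp only [one_mul] at e1 e2
  obtain ⟨ht₀1, ht₀a⟩ := ht₀
  obtain ⟨hs₀a, hs₀b⟩ := hs₀
  set P := sgm' (t₀ * x) * x with hP
  set Q := sgm' (s₀ * x) * x with hQ
  set R := sgm' (t₀ * y) * y with hR
  set T := sgm' (s₀ * y) * y with hT
  set Δu1 := sgm x - sgm (a * x) with hdu1
  set Δu2 := sgm (a * x) - sgm (b * x) with hdu2
  set Δv1 := sgm y - sgm (a * y) with hdv1
  set Δv2 := sgm (a * y) - sgm (b * y) with hdv2
  have hb1 : (1:ℝ) < b := ha.trans hab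
  have hΔu1 : 0 < Δu1 := by
    have : a * x < x := by nlinarith
    simpa [hdu1, sub_pos] using sgm_strictMono this
  have hΔu2 : 0 < Δu2 := by
    have : b * x < a * x := by nlinarith
    simpa [hdu2, sub_pos] using sgm_strictMono this
  have hΔv1 : 0 < Δv1 := by
    have : a * y < y := by nlinarith
    simpa [hdv1, sub_pos] using sgm_strictMono this
  have hΔv2 : 0 < Δv2 := by
    have : b * y < a * y := by nlinarith
    simpa [hdv2, sub_pos] using sgm_strictMono this
  have e1' : Δu1 * R = Δv1 * P := by
    rw [hdu1, hdv1, hR, hP]; linear_combination -e1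
  have e2' : Δu2 * T = Δv2 * Q := by
    rw [hdu2, hdv2, hT, hQ]; linear_combination -e2
  have hC := claimC hxy hy (lt_trans one_pos ht₀1) (ht₀a.trans hs₀a)
  have hxy0 : 0 < x * y := mul_pos_of_neg_of_neg hx hy
  have hRQ : R * Q < T * P := by
    have h := mul_lt_mul_of_pos_left hC hxy0
    calc R * Q = x * y * (sgm' (t₀ * y) * sgm' (s₀ * x)) := by rw [hR, hQ]; ring
      _ < x * y * (sgm' (s₀ * y) * sgm' (t₀ * x)) := h
      _ = T * P := by rw [hT, hP]; ring
  have hPneg : P < 0 := mul_neg_of_pos_of_neg (sgm'_pos _) hx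
  have hQneg : Q < 0 := mul_neg_of_pos_of_neg (sgm'_pos _) hx
  have hPQ : 0 < P * Q := mul_pos_of_neg_of_neg hPneg hQneg
  have h6 := mul_lt_mul_of_pos_left hRQ (mul_pos hΔu1 hΔu2)
  have h5 : Δu2 * Δv1 * (P * Q) < Δv2 * Δu1 * (P * Q) := by
    have eL : Δu2 * Δv1 * (P * Q) = Δu1 * Δu2 * (R * Q) := by
      linear_combination (-(Δu2 * Q)) * e1'
    have eR : Δv2 * Δu1 * (P * Q) = Δu1 * Δu2 * (T * P) := by
      linear_combination (-(Δu1 * P)) * e2'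
    rw [eL, eR]; exact h6
  have hfin : Δu2 * Δv1 < Δv2 * Δu1 := lt_of_mul_lt_mul_right h5 hPQ.le
  have hab0 : 0 < a * b := by positivity
  have := mul_lt_mul_of_pos_left hfin hab0
  unfold Dv
  rw [hdu1, hdu2, hdv1, hdv2] at this
  nlinarith [this]

lemma continuous_Lf : Continuous Lf :=
  (continuous_const.add Real.continuous_exp).log one_add_exp_ne

lemma continuous_Gf (q : ℝ) : Continuous (fun x => Gf q x) :=
  (continuous_Lf.comp (continuous_const.mul continuous_id)).sub
    (continuous_const.mul continuous_Lf)

lemma Dv_neg {q x : ℝ} (hq : 1 < q) (hx : x < 0) : Dv q x < 0 := by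
  have h : q * x < x := by nlinarith
  have := sgm_strictMono h
  unfold Dv
  nlinarith

lemma G_anti {q : ℝ} (hq : 1 < q) : StrictAntiOn (fun x => Gf q x) (Iic 0) := by
  apply strictAntiOn_of_deriv_neg (convex_Iic 0) (continuous_Gf q).continuousOn
  intro x hx
  rw [interior_Iic] at hx
  rw [(hasDerivAt_Gf q x).deriv]
  exact Dv_neg hq hx

lemma mvt_Gf (a b : ℝ) {c d : ℝ} (hcd : c < d) :
    ∃ ξ ∈ Ioo c d, (Gf a d - Gf a c) * Dv b ξ = (Gf b d - Gf b c) * Dv a ξ := by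
  exact exists_ratio_hasDerivAt_eq_ratio_slope (fun x => Gf b x)
    (fun x => Dv b x) hcd (continuous_Gf b).continuousOn
    (fun x _ => hasDerivAt_Gf b x)
    (fun x => Gf a x) (fun x => Dv a x) (continuous_Gf a).continuousOn
    (fun x _ => hasDerivAt_Gf a x)

/-- Level-1 key inequality. -/
lemma keyG {x₁ x₂ x₃ a b : ℝ} (h12 : x₁ < x₂) (h23 : x₂ < x₃) (h30 : x₃ < 0)
    (ha : 1 < a) (hab : a < b) :
    (Gf b x₁ - Gf b x₂) * (Gf a x₂ - Gf a x₃)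
      < (Gf b x₂ - Gf b x₃) * (Gf a x₁ - Gf a x₂) := by
  have hb : 1 < b := ha.trans hab
  have h20 : x₂ < 0 := h23.trans h30
  have h10 : x₁ < 0 := h12.trans h20
  obtain ⟨ξ, hξ, e1⟩ := mvt_Gf a b h12
  obtain ⟨η, hη, e2⟩ := mvt_Gf a b h23
  have hξ0 : ξ < 0 := hξ.2.trans h20
  have hη0 : η < 0 := hη.2.trans h30
  have hR := sub_R (hξ.2.trans hη.1) hη0 ha hab
  set A := Gf a x₁ - Gf a x₂ with hA
  set B := Gf a x₂ - Gf a x₃ with hB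
  set A' := Gf b x₁ - Gf b x₂ with hA'
  set B' := Gf b x₂ - Gf b x₃ with hB'
  have hApos : 0 < A := by
    have := G_anti ha (le_of_lt h10) (le_of_lt h20) h12
    simp only [hA]; linarith [this]
  have hBpos : 0 < B := by
    have := G_anti ha (le_of_lt h20) (le_of_lt h30) h23
    simp only [hB]; linarith [this]
  have hA'pos : 0 < A' := by
    have := G_anti hb (le_of_lt h10) (le_of_lt h20) h12
    simp only [hA']; linarith [this]
  have hB'pos : 0 < B' := by
    have := G_anti hb (le_of_lt h20) (le_of_lt h30) h23
    simp only [hB']; linarith [this]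
  have hDaξ : Dv a ξ < 0 := Dv_neg ha hξ0
  have hDaη : Dv a η < 0 := Dv_neg ha hη0
  have e1' : A * Dv b ξ = A' * Dv a ξ := by
    rw [hA, hA']; linear_combination -e1
  have e2' : B * Dv b η = B' * Dv a η := by
    rw [hB, hB']; linear_combination -e2
  have hDD : 0 < Dv a ξ * Dv a η := mul_pos_of_neg_of_neg hDaξ hDaη
  have h6 := mul_lt_mul_of_pos_left hR (mul_pos hApos hBpos)
  have h5 : A' * B * (Dv a ξ * Dv a η) < B' * A * (Dv a ξ * Dv a η) := by
    have eL : A' * B * (Dv a ξ * Dv a η) = A * B * (Dv b ξ * Dv a η) := by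
      linear_combination (-(B * Dv a η)) * e1'
    have eR : B' * A * (Dv a ξ * Dv a η) = A * B * (Dv b η * Dv a ξ) := by
      linear_combination (-(A * Dv a ξ)) * e2'
    rw [eL, eR]; exact h6
  exact lt_of_mul_lt_mul_right h5 hDD.le

lemma taup_eq {p : ℝ} (q : ℝ) (hp0 : 0 < p) (hp1 : p < 1) :
    taup p q = Gf q (Real.log (p / (1 - p))) / Real.log 2 := by
  have hp1' : 0 < 1 - p := by linarith
  have hdiv : 0 < p / (1 - p) := by positivity
  set x := Real.log (p / (1 - p)) with hxdef
  have hrp : 0 < p ^ q := Real.rpow_pos_of_pos hp0 q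
  have hrp1 : 0 < (1 - p) ^ q := Real.rpow_pos_of_pos hp1' q
  have hx : Real.exp x = p / (1 - p) := Real.exp_log hdiv
  have hLx : Lf x = -Real.log (1 - p) := by
    unfold Lf
    rw [hx]
    have : 1 + p / (1 - p) = (1 - p)⁻¹ := by field_simp; ring
    rw [this, Real.log_inv]
  have hqx : Real.exp (q * x) = p ^ q / (1 - p) ^ q := by
    rw [mul_comm, Real.exp_mul, hx, Real.div_rpow hp0.le hp1'.le]
  have hLqx : Lf (q * x) = Real.log (p ^ q + (1 - p) ^ q) - q * Real.log (1 - p) := by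
    unfold Lf
    rw [hqx]
    have h1 : 1 + p ^ q / (1 - p) ^ q = (p ^ q + (1 - p) ^ q) / (1 - p) ^ q := by
      field_simp
      ring
    rw [h1, Real.log_div (by positivity) (by positivity), Real.log_rpow hp1']
  unfold taup Gf
  rw [hLqx, hLx]
  ring

/-- Lemma 5.2. Let `0 < p₁ < p₂ < p₃ < 1/2` and `τᵢ = τ(pᵢ,·)`. Then
`q ↦ (τ₁(q) - τ₂(q))/(τ₂(q) - τ₃(q))` is well defined (nonvanishing denominator) and
strictly decreasing on `(1,∞)`. -/
theorem statement16
    (p₁ p₂ p₃ : ℝ)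
    (hp₁ : 0 < p₁) (hp₁₂ : p₁ < p₂) (hp₂₃ : p₂ < p₃) (hp₃ : p₃ < 1 / 2) :
    (∀ q : ℝ, 1 < q → taup p₂ q - taup p₃ q ≠ 0)
      ∧ StrictAntiOn
          (fun q : ℝ => (taup p₁ q - taup p₂ q) / (taup p₂ q - taup p₃ q))
          (Set.Ioi 1) := by
  have hp₂0 : 0 < p₂ := hp₁.trans hp₁₂
  have hp₃0 : 0 < p₃ := hp₂0.trans hp₂₃
  have hp₁1 : p₁ < 1 := by linarith
  have hp₂1 : p₂ < 1 := by linarith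
  have hp₃1 : p₃ < 1 := by linarith
  set x₁ := Real.log (p₁ / (1 - p₁)) with hx₁
  set x₂ := Real.log (p₂ / (1 - p₂)) with hx₂
  set x₃ := Real.log (p₃ / (1 - p₃)) with hx₃
  have hlog2 : 0 < Real.log 2 := Real.log_pos one_lt_two
  have hmono : ∀ p p' : ℝ, 0 < p → p < p' → p' < 1 →
      Real.log (p / (1 - p)) < Real.log (p' / (1 - p')) := by
    intro p p' hp hpp' hp'
    apply Real.log_lt_log (div_pos hp (by linarith))
    rw [div_lt_div_iff₀ (by linarith) (by linarith)]
    nlinarith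
  have h12 : x₁ < x₂ := hmono _ _ hp₁ hp₁₂ hp₂1
  have h23 : x₂ < x₃ := hmono _ _ hp₂0 hp₂₃ hp₃1
  have h30 : x₃ < 0 := by
    apply Real.log_neg (div_pos hp₃0 (by linarith))
    rw [div_lt_one (by linarith)]
    linarith
  have h20 : x₂ < 0 := h23.trans h30
  have h10 : x₁ < 0 := h12.trans h20
  have hdiff : ∀ (q : ℝ) (p p' : ℝ), 0 < p → p < 1 → 0 < p' → p' < 1 →
      taup p q - taup p' q
        = (Gf q (Real.log (p / (1 - p))) - Gf q (Real.log (p' / (1 - p')))) / Real.log 2 := by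
    intro q p p' h1 h2 h3 h4
    rw [taup_eq q h1 h2, taup_eq q h3 h4, div_sub_div_same]
  have hBpos : ∀ q : ℝ, 1 < q → 0 < Gf q x₂ - Gf q x₃ := by
    intro q hq
    have := G_anti hq (le_of_lt h20) (le_of_lt h30) h23
    simp only [sub_pos]
    exact this
  constructor
  · intro q hq
    rw [hdiff q p₂ p₃ hp₂0 hp₂1 hp₃0 hp₃1]
    have := hBpos q hq
    positivity
  · intro a ha b hb hab
    simp only [mem_Ioi] at ha hb
    have hBa := hBpos a ha
    have hBb := hBpos b hb
    have hApos : ∀ q : ℝ, 1 < q → 0 < Gf q x₁ - Gf q x₂ := by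
      intro q hq
      have := G_anti hq (le_of_lt h10) (le_of_lt h20) h12
      simp only [sub_pos]; exact this
    have hratio : ∀ q : ℝ, 1 < q →
        (taup p₁ q - taup p₂ q) / (taup p₂ q - taup p₃ q)
          = (Gf q x₁ - Gf q x₂) / (Gf q x₂ - Gf q x₃) := by
      intro q hq
      rw [hdiff q p₁ p₂ hp₁ hp₁1 hp₂0 hp₂1, hdiff q p₂ p₃ hp₂0 hp₂1 hp₃0 hp₃1]
      exact div_div_div_cancel_right₀ hlog2.ne' _ _
    simp only []
    rw [hratio a ha, hratio b hb, div_lt_div_iff₀ hBb hBa]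
    have := keyG h12 h23 h30 ha hab
    nlinarith [this]
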